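/- Let X be an n×n real matrix with XᵀX = Iₙ (orthonormal), let y ∈ ℝⁿ, and for λ ≥ 0 define L(α) = ‖y − Xα‖₂ + λ‖α‖₂ for α ∈ ℝⁿ. If λ > 1 then α = 0 is the unique global minimizer of L, and if 0 ≤ λ < 1 then α = Xᵀy is the unique global minimizer of L. -/
import Mathlib

open scoped BigOperators

/-- Euclidean norm of a vector in `ℝᵐ`. -/
noncomputable def norm2 {m : ℕ} (v : Fin m → ℝ) : ℝ := Real.sqrt (∑ i, (v i) ^ 2)

/-- The square-root group-LASSO objective with orthonormal design:
`L(α) = ‖y − Xα‖₂ + λ‖α‖₂`. -/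
noncomputable def sqrtGroupLassoObj {n : ℕ} (X : Matrix (Fin n) (Fin n) ℝ)
    (y : Fin n → ℝ) (lam : ℝ) (α : Fin n → ℝ) : ℝ :=
  norm2 (y - X.mulVec α) + lam * norm2 α

lemma norm2_eq_norm {m : ℕ} (v : Fin m → ℝ) :
    norm2 v = ‖(WithLp.equiv 2 (Fin m → ℝ)).symm v‖ := by
  rw [EuclideanSpace.norm_eq]
  simp [norm2, sq_abs]

lemma norm2_nonneg {m : ℕ} (v : Fin m → ℝ) : 0 ≤ norm2 v := Real.sqrt_nonneg _

lemma norm2_zero' {m : ℕ} : norm2 (0 : Fin m → ℝ) = 0 := by simp [norm2]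

lemma norm2_pos {m : ℕ} {v : Fin m → ℝ} (hv : v ≠ 0) : 0 < norm2 v := by
  rw [norm2_eq_norm]
  exact norm_pos_iff.mpr (by simpa using hv)

lemma norm2_triangle {m : ℕ} (u v : Fin m → ℝ) :
    norm2 (u + v) ≤ norm2 u + norm2 v := by
  simp only [norm2_eq_norm]
  exact norm_add_le _ _

lemma norm2_mulVec {n : ℕ} (X : Matrix (Fin n) (Fin n) ℝ)
    (hX : X.transpose * X = 1) (v : Fin n → ℝ) :
    norm2 (X.mulVec v) = norm2 v := by
  unfold norm2
  congr 1
  have h : ∀ w : Fin n → ℝ, ∑ i, (w i)^2 = dotProduct w w := by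
    intro w; simp [dotProduct, sq]
  rw [h, h, Matrix.dotProduct_mulVec, ← Matrix.mulVec_transpose,
    Matrix.mulVec_mulVec, hX, Matrix.one_mulVec]

/-- With orthonormal design `XᵀX = Iₙ`: if `λ > 1` then `0` is the unique global
minimizer of `L(α) = ‖y − Xα‖₂ + λ‖α‖₂`, and if `0 ≤ λ < 1` then `Xᵀy` is the
unique global minimizer. -/
theorem unique_minimizers {n : ℕ} (X : Matrix (Fin n) (Fin n) ℝ)
    (hX : X.transpose * X = 1) (y : Fin n → ℝ) (lam : ℝ) (hlam : 0 ≤ lam) :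
    (1 < lam →
      (∀ α : Fin n → ℝ, sqrtGroupLassoObj X y lam 0 ≤ sqrtGroupLassoObj X y lam α) ∧
      (∀ α : Fin n → ℝ, α ≠ 0 →
        sqrtGroupLassoObj X y lam 0 < sqrtGroupLassoObj X y lam α)) ∧
    (lam < 1 →
      (∀ α : Fin n → ℝ,
        sqrtGroupLassoObj X y lam (X.transpose.mulVec y) ≤ sqrtGroupLassoObj X y lam α) ∧
      (∀ α : Fin n → ℝ, α ≠ X.transpose.mulVec y →
        sqrtGroupLassoObj X y lam (X.transpose.mulVec y) < sqrtGroupLassoObj X y lam α)) := by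
  have hX' : X * X.transpose = 1 := mul_eq_one_comm.mp hX
  set β := X.transpose.mulVec y with hβ
  have hy : X.mulVec β = y := by
    rw [hβ, Matrix.mulVec_mulVec, hX', Matrix.one_mulVec]
  have hL : ∀ α, sqrtGroupLassoObj X y lam α = norm2 (β - α) + lam * norm2 α := by
    intro α
    unfold sqrtGroupLassoObj
    rw [show y - X.mulVec α = X.mulVec (β - α) by
      rw [Matrix.mulVec_sub, hy], norm2_mulVec X hX]
  have htri : ∀ α, norm2 β ≤ norm2 (β - α) + norm2 α := by
    intro α
    calc norm2 β = norm2 ((β - α) + α) := by rw [sub_add_cancel]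
    _ ≤ norm2 (β - α) + norm2 α := norm2_triangle _ _
  have hL0 : sqrtGroupLassoObj X y lam 0 = norm2 β := by
    rw [hL]; simp [norm2_zero']
  have hLβ : sqrtGroupLassoObj X y lam β = lam * norm2 β := by
    rw [hL]; simp [norm2_zero']
  constructor
  · intro h1
    constructor
    · intro α
      rw [hL0, hL]
      have := htri α
      nlinarith [norm2_nonneg α]
    · intro α hα
      rw [hL0, hL]
      have := htri α
      have hb : 0 < norm2 α := norm2_pos hα
      nlinarith
  · intro h1
    constructor
    · intro α
      rw [hLβ, hL]
      have := htri α
      nlinarith [norm2_nonneg (β - α), norm2_nonneg α]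
    · intro α hα
      rw [hLβ, hL]
      have := htri α
      have ha : 0 < norm2 (β - α) := norm2_pos (sub_ne_zero.mpr (Ne.symm hα))
      nlinarith [norm2_nonneg α]
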